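/- Let X be a set, w an element of the free monoid ⟨X⟩, and z a symbol not in X. Then the monoid presented by the generating set X ∪ {z} subject to the single relation w·z·w = 1 is isomorphic to ⟨X : i(w)⟩, via an isomorphism respecting the images of the generators from X; under this isomorphism z corresponds to i(w)·i(w). -/

import Mathlib

namespace AdjoinInverses

variable {X : Type*}

/-- The embedding of the free monoid on `X` into the free monoid on `X ⊕ S`. -/
def emb (S : Set (FreeMonoid X)) : FreeMonoid X →* FreeMonoid (X ⊕ S) :=
  FreeMonoid.map Sum.inl

/-- The generator `i(w)` corresponding to `w ∈ S`. -/
def igen (S : Set (FreeMonoid X)) (w : S) : FreeMonoid (X ⊕ S) :=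
  FreeMonoid.of (Sum.inr w)

/-- The defining relations `w ⬝ i(w) = 1` and `i(w) ⬝ w = 1` for `w ∈ S`. -/
inductive InvRel (S : Set (FreeMonoid X)) : FreeMonoid (X ⊕ S) → FreeMonoid (X ⊕ S) → Prop
  | mul_inv (w : S) : InvRel S (emb S w.1 * igen S w) 1
  | inv_mul (w : S) : InvRel S (igen S w * emb S w.1) 1

/-- The congruence generated by the defining relations. -/
def invCon (S : Set (FreeMonoid X)) : Con (FreeMonoid (X ⊕ S)) := conGen (InvRel S)

/-- The monoid `⟨X : i(S)⟩` obtained from the free monoid on `X` by universally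
adjoining a two-sided inverse to each element of `S`. -/
def AdjInv (S : Set (FreeMonoid X)) : Type _ := (invCon S).Quotient

instance (S : Set (FreeMonoid X)) : Monoid (AdjInv S) := Con.monoid _

/-- The natural homomorphism `⟨X⟩ → ⟨X : i(S)⟩`. -/
def natHom (S : Set (FreeMonoid X)) : FreeMonoid X →* AdjInv S :=
  ((invCon S).mk').comp (emb S)

/-- The adjoined inverse `i(w)`, as an element of `⟨X : i(S)⟩`. -/
def invElt (S : Set (FreeMonoid X)) (w : S) : AdjInv S :=
  (invCon S).mk' (igen S w)

/-- `S` and `S'` are inverse-equivalent: each element of `S'` becomes invertible in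
`⟨X : i(S)⟩` and each element of `S` becomes invertible in `⟨X : i(S')⟩`. -/
def InvEquiv (S S' : Set (FreeMonoid X)) : Prop :=
  (∀ w ∈ S', IsUnit (natHom S w)) ∧ ∀ w ∈ S, IsUnit (natHom S' w)

/-- Two (nonidentity) elements of the free monoid overlap: one can be written `a*b`
and the other `b*c` with `b ≠ 1` and at most one of `a`, `c` equal to `1`. -/
def Overlap (u v : FreeMonoid X) : Prop :=
  ∃ a b c : FreeMonoid X, b ≠ 1 ∧ (a ≠ 1 ∨ c ≠ 1) ∧ u = a * b ∧ v = b * c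

/-- A set `T` is overlap-free if no pair of elements of `T` (distinct or not) overlap. -/
def OverlapFree (T : Set (FreeMonoid X)) : Prop :=
  ∀ u ∈ T, ∀ v ∈ T, ¬ Overlap u v

/-- The congruence on the free monoid on `X ⊕ Unit` (with the extra generator `z`)
generated by the single relation `w ⬝ z ⬝ w = 1`. -/
def spCon (w : FreeMonoid X) : Con (FreeMonoid (X ⊕ Unit)) :=
  conGen (fun u v : FreeMonoid (X ⊕ Unit) =>
    u = (FreeMonoid.map Sum.inl w) * FreeMonoid.of (Sum.inr ()) *
        (FreeMonoid.map Sum.inl w) ∧ v = 1)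

/-- The special monoid `⟨X ∪ {z} | w z w = 1⟩`. -/
def SpecialMonoid (w : FreeMonoid X) : Type _ := (spCon w).Quotient

instance (w : FreeMonoid X) : Monoid (SpecialMonoid w) := Con.monoid _

-- auxiliary
lemma aux_comm {M : Type*} [Monoid M] {a b : M} (h : a * b * a = 1) : b * a = a * b := by
  calc b * a = (a * b * a) * (b * a) := by rw [h, one_mul]
    _ = (a * b) * (a * b * a) := by simp [mul_assoc]
    _ = a * b := by rw [h, mul_one]

lemma W_mul_I (w : FreeMonoid X) :
    natHom ({w} : Set (FreeMonoid X)) w * invElt {w} ⟨w, rfl⟩ = 1 := by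
  have h : (invCon ({w} : Set (FreeMonoid X)))
      (emb {w} w * igen {w} ⟨w, rfl⟩) 1 :=
    ConGen.Rel.of _ _ (InvRel.mul_inv (S := ({w} : Set (FreeMonoid X))) ⟨w, rfl⟩)
  have := (Con.eq (invCon ({w} : Set (FreeMonoid X)))).mpr h
  exact this

lemma I_mul_W (w : FreeMonoid X) :
    invElt ({w} : Set (FreeMonoid X)) ⟨w, rfl⟩ * natHom {w} w = 1 := by
  have h : (invCon ({w} : Set (FreeMonoid X)))
      (igen {w} ⟨w, rfl⟩ * emb {w} w) 1 :=
    ConGen.Rel.of _ _ (InvRel.inv_mul (S := ({w} : Set (FreeMonoid X))) ⟨w, rfl⟩)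
  have := (Con.eq (invCon ({w} : Set (FreeMonoid X)))).mpr h
  exact this


lemma spRel (w : FreeMonoid X) :
    (spCon w).mk' (FreeMonoid.map Sum.inl w) * (spCon w).mk' (FreeMonoid.of (Sum.inr ())) *
      (spCon w).mk' (FreeMonoid.map Sum.inl w) = 1 := by
  have h : (spCon w)
      ((FreeMonoid.map Sum.inl w) * FreeMonoid.of (Sum.inr ()) * (FreeMonoid.map Sum.inl w)) 1 :=
    ConGen.Rel.of _ _ ⟨rfl, rfl⟩
  have := (Con.eq (spCon w)).mpr h
  simpa [← map_mul] using this

/-- The forward lifting target. -/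
def Fhom (w : FreeMonoid X) : FreeMonoid (X ⊕ Unit) →* AdjInv ({w} : Set (FreeMonoid X)) :=
  FreeMonoid.lift (Sum.elim (fun x => natHom {w} (FreeMonoid.of x))
    (fun _ => invElt {w} ⟨w, rfl⟩ * invElt {w} ⟨w, rfl⟩))

lemma Fhom_emb (w u : FreeMonoid X) :
    Fhom w (FreeMonoid.map Sum.inl u) = natHom ({w} : Set (FreeMonoid X)) u := by
  have h : (Fhom w).comp (FreeMonoid.map Sum.inl) = natHom ({w} : Set (FreeMonoid X)) :=
    FreeMonoid.hom_eq fun x => rfl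
  exact DFunLike.congr_fun h u

lemma Fker (w : FreeMonoid X) : spCon w ≤ Con.ker (Fhom w) := by
  refine Con.conGen_le.2 ?_
  rintro u v ⟨rfl, rfl⟩
  show Fhom w _ = Fhom w 1
  rw [map_one, map_mul, map_mul, Fhom_emb]
  have hz : Fhom w (FreeMonoid.of (Sum.inr ())) = invElt {w} ⟨w, rfl⟩ * invElt {w} ⟨w, rfl⟩ := rfl
  rw [hz]
  calc natHom ({w} : Set (FreeMonoid X)) w * (invElt {w} ⟨w, rfl⟩ * invElt {w} ⟨w, rfl⟩) *
        natHom {w} w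
      = (natHom {w} w * invElt {w} ⟨w, rfl⟩) * (invElt {w} ⟨w, rfl⟩ * natHom {w} w) := by
        simp [mul_assoc]
    _ = 1 := by rw [W_mul_I, I_mul_W, one_mul]

/-- The backward lifting target. -/
def Ghom (w : FreeMonoid X) :
    FreeMonoid (X ⊕ ({w} : Set (FreeMonoid X))) →* SpecialMonoid w :=
  FreeMonoid.lift (Sum.elim (fun x => (spCon w).mk' (FreeMonoid.of (Sum.inl x)))
    (fun _ => (spCon w).mk' (FreeMonoid.of (Sum.inr ())) *
      (spCon w).mk' (FreeMonoid.map Sum.inl w)))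

lemma Ghom_emb (w u : FreeMonoid X) :
    Ghom w (emb ({w} : Set (FreeMonoid X)) u) = (spCon w).mk' (FreeMonoid.map Sum.inl u) := by
  have h : (Ghom w).comp (emb ({w} : Set (FreeMonoid X))) =
      ((spCon w).mk').comp (FreeMonoid.map Sum.inl) := FreeMonoid.hom_eq fun x => rfl
  exact DFunLike.congr_fun h u

lemma Gker (w : FreeMonoid X) : invCon ({w} : Set (FreeMonoid X)) ≤ Con.ker (Ghom w) := by
  set A := (spCon w).mk' (FreeMonoid.map Sum.inl w) with hA
  set B := (spCon w).mk' (FreeMonoid.of (Sum.inr ())) with hB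
  have haba : A * B * A = 1 := spRel w
  have hcomm : B * A = A * B := aux_comm haba
  have h1 : A * (B * A) = 1 := by rw [← mul_assoc]; exact haba
  have h2 : (B * A) * A = 1 := by rw [hcomm]; exact haba
  refine Con.conGen_le.2 ?_
  rintro u v (⟨w'⟩ | ⟨w'⟩)
  · show Ghom w _ = Ghom w 1
    rw [map_one, map_mul]
    have hig : Ghom w (igen ({w} : Set (FreeMonoid X)) w') = B * A := rfl
    have hw : w'.1 = w := w'.2
    rw [hig, Ghom_emb, hw, ← hA]
    exact h1
  · show Ghom w _ = Ghom w 1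
    rw [map_one, map_mul]
    have hig : Ghom w (igen ({w} : Set (FreeMonoid X)) w') = B * A := rfl
    have hw : w'.1 = w := w'.2
    rw [hig, Ghom_emb, hw, ← hA]
    exact h2

def fwd (w : FreeMonoid X) : SpecialMonoid w →* AdjInv ({w} : Set (FreeMonoid X)) :=
  (spCon w).lift (Fhom w) (Fker w)

def bwd (w : FreeMonoid X) : AdjInv ({w} : Set (FreeMonoid X)) →* SpecialMonoid w :=
  (invCon ({w} : Set (FreeMonoid X))).lift (Ghom w) (Gker w)

lemma fwd_mk (w : FreeMonoid X) (u : FreeMonoid (X ⊕ Unit)) :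
    fwd w ((spCon w).mk' u) = Fhom w u := Con.lift_mk' (Fker w) u

lemma bwd_mk (w : FreeMonoid X) (u : FreeMonoid (X ⊕ ({w} : Set (FreeMonoid X)))) :
    bwd w ((invCon ({w} : Set (FreeMonoid X))).mk' u) = Ghom w u := Con.lift_mk' (Gker w) u

lemma bwd_fwd (w : FreeMonoid X) : (bwd w).comp (fwd w) = MonoidHom.id (SpecialMonoid w) := by
  set A := (spCon w).mk' (FreeMonoid.map Sum.inl w) with hA
  set B := (spCon w).mk' (FreeMonoid.of (Sum.inr ())) with hB
  have haba : A * B * A = 1 := spRel w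
  have hcomm : B * A = A * B := aux_comm haba
  have h1 : A * (B * A) = 1 := by rw [← mul_assoc]; exact haba
  have hcomp : ((bwd w).comp (fwd w)).comp (spCon w).mk' = (spCon w).mk' := by
    refine FreeMonoid.hom_eq fun a => ?_
    rcases a with x | u
    · show bwd w (fwd w ((spCon w).mk' (FreeMonoid.of (Sum.inl x)))) = _
      rw [fwd_mk]
      have h : Fhom w (FreeMonoid.of (Sum.inl x)) = natHom ({w} : Set (FreeMonoid X))
          (FreeMonoid.of x) := rfl
      rw [h]
      have h' : natHom ({w} : Set (FreeMonoid X)) (FreeMonoid.of x) =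
          (invCon ({w} : Set (FreeMonoid X))).mk' (FreeMonoid.of (Sum.inl x)) := rfl
      rw [h', bwd_mk]
      rfl
    · show bwd w (fwd w ((spCon w).mk' (FreeMonoid.of (Sum.inr ())))) = _
      rw [fwd_mk]
      have h : Fhom w (FreeMonoid.of (Sum.inr ())) =
          (invCon ({w} : Set (FreeMonoid X))).mk'
            (igen {w} ⟨w, rfl⟩ * igen {w} ⟨w, rfl⟩) := by
        show invElt ({w} : Set (FreeMonoid X)) ⟨w, rfl⟩ * invElt {w} ⟨w, rfl⟩ = _
        exact (map_mul ((invCon ({w} : Set (FreeMonoid X))).mk') _ _).symm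
      rw [h, bwd_mk, map_mul]
      have hig : Ghom w (igen ({w} : Set (FreeMonoid X)) ⟨w, rfl⟩) = B * A := rfl
      rw [hig]
      calc B * A * (B * A) = B * (A * (B * A)) := by simp [mul_assoc]
        _ = B := by rw [h1, mul_one]
  ext q
  obtain ⟨u, rfl⟩ := Con.mk'_surjective q
  exact DFunLike.congr_fun hcomp u

lemma fwd_bwd (w : FreeMonoid X) :
    (fwd w).comp (bwd w) = MonoidHom.id (AdjInv ({w} : Set (FreeMonoid X))) := by
  have hcomp : ((fwd w).comp (bwd w)).comp (invCon ({w} : Set (FreeMonoid X))).mk' =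
      (invCon ({w} : Set (FreeMonoid X))).mk' := by
    refine FreeMonoid.hom_eq fun a => ?_
    rcases a with x | w'
    · show fwd w (bwd w ((invCon ({w} : Set (FreeMonoid X))).mk'
          (FreeMonoid.of (Sum.inl x)))) = _
      rw [bwd_mk]
      have h : Ghom w (FreeMonoid.of (Sum.inl x)) =
          (spCon w).mk' (FreeMonoid.of (Sum.inl x)) := rfl
      rw [h, fwd_mk]
      rfl
    · show fwd w (bwd w ((invCon ({w} : Set (FreeMonoid X))).mk'
          (FreeMonoid.of (Sum.inr w')))) = _
      rw [bwd_mk]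
      have h : Ghom w (FreeMonoid.of (Sum.inr w')) =
          (spCon w).mk' (FreeMonoid.of (Sum.inr ())) *
            (spCon w).mk' (FreeMonoid.map Sum.inl w) := rfl
      rw [h]; erw [map_mul]; rw [fwd_mk, fwd_mk]
      have h2 : Fhom w (FreeMonoid.of (Sum.inr ())) =
          invElt ({w} : Set (FreeMonoid X)) ⟨w, rfl⟩ * invElt {w} ⟨w, rfl⟩ := rfl
      rw [h2, Fhom_emb]
      have hw : (⟨w, rfl⟩ : ({w} : Set (FreeMonoid X))) = w' := by
        ext; exact (w'.2 : w'.1 = w).symm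
      calc invElt ({w} : Set (FreeMonoid X)) ⟨w, rfl⟩ * invElt {w} ⟨w, rfl⟩ * natHom {w} w
          = invElt {w} ⟨w, rfl⟩ * (invElt {w} ⟨w, rfl⟩ * natHom {w} w) := by
            rw [mul_assoc]
        _ = invElt {w} ⟨w, rfl⟩ := by rw [I_mul_W, mul_one]
        _ = (show AdjInv ({w} : Set (FreeMonoid X)) from
            (invCon ({w} : Set (FreeMonoid X))).mk' (FreeMonoid.of (Sum.inr w'))) := by
            rw [hw]; rfl
  ext q
  obtain ⟨u, rfl⟩ := Con.mk'_surjective q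
  exact DFunLike.congr_fun hcomp u

/-- `⟨X ∪ {z} | w z w = 1⟩ ≅ ⟨X : i(w)⟩`, via an isomorphism respecting
the generators from `X` and sending `z` to `i(w) ⬝ i(w)`. -/
theorem stmt19 (X : Type*) (w : FreeMonoid X) :
    ∃ φ : SpecialMonoid w ≃* AdjInv ({w} : Set (FreeMonoid X)),
      (∀ x : X, φ ((spCon w).mk' (FreeMonoid.of (Sum.inl x))) =
        natHom {w} (FreeMonoid.of x)) ∧
      φ ((spCon w).mk' (FreeMonoid.of (Sum.inr ()))) =
        invElt {w} ⟨w, rfl⟩ * invElt {w} ⟨w, rfl⟩ := by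
  refine ⟨MonoidHom.toMulEquiv (fwd w) (bwd w) (bwd_fwd w) (fwd_bwd w), ?_, ?_⟩
  · intro x
    show fwd w ((spCon w).mk' (FreeMonoid.of (Sum.inl x))) = _
    rw [fwd_mk]; rfl
  · show fwd w ((spCon w).mk' (FreeMonoid.of (Sum.inr ()))) = _
    rw [fwd_mk]; rfl

end AdjoinInverses
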